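/- (Low-degree OR representation modulo 6, Barrington–Beigel–Rudich.) There exists a constant c such that for every natural number k there is a polynomial g in k variables over ℤ/6ℤ of total degree at most c·(√k + 1) which represents OR on Boolean inputs: for every assignment x ∈ {0,1}^k (viewing 0 and 1 as elements of ℤ/6ℤ), g(x) = 0 if and only if xᵢ = 0 for every i. -/
import Mathlib

open Finset MvPolynomial

instance : Nontrivial (ZMod 6) := ⟨0, 1, by decide⟩

lemma eval_esymm_boolean {k : ℕ} (x : Fin k → ZMod 6) (hx : ∀ i, x i = 0 ∨ x i = 1) (m : ℕ) :
    MvPolynomial.eval x (esymm (Fin k) (ZMod 6) m)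
      = (((Finset.univ.filter fun i => x i = 1).card.choose m : ZMod 6)) := by
  classical
  set s := Finset.univ.filter fun i => x i = 1 with hs
  rw [esymm, map_sum]
  have h1 : ∀ t ∈ powersetCard m (univ : Finset (Fin k)),
      MvPolynomial.eval x (∏ i ∈ t, X i) = if t ⊆ s then (1 : ZMod 6) else 0 := by
    intro t _
    rw [map_prod]
    simp only [eval_X]
    split_ifs with h
    · refine Finset.prod_eq_one fun i hi => ?_
      have := h hi
      simp only [hs, Finset.mem_filter] at this
      exact this.2
    · obtain ⟨i, hi, hns⟩ := Finset.not_subset.mp h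
      refine Finset.prod_eq_zero hi ?_
      rcases hx i with h0 | h1
      · exact h0
      · exact absurd (by simp [hs, h1]) hns
  rw [Finset.sum_congr rfl h1, Finset.sum_ite, Finset.sum_const_zero, add_zero,
    Finset.sum_const, nsmul_eq_mul, mul_one]
  congr 1
  rw [← Finset.card_powersetCard]
  congr 1
  ext t
  simp only [Finset.mem_filter, Finset.mem_powersetCard, Finset.subset_univ, true_and]
  tauto


lemma totalDegree_esymm_le' (k m : ℕ) :
    (esymm (Fin k) (ZMod 6) m).totalDegree ≤ m := by
  rw [esymm]
  refine (totalDegree_finset_sum _ _).trans (Finset.sup_le fun t ht => ?_)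
  refine (totalDegree_finset_prod _ _).trans ?_
  rw [Finset.mem_powersetCard] at ht
  calc ∑ i ∈ t, (X i : MvPolynomial (Fin k) (ZMod 6)).totalDegree
      ≤ ∑ _i ∈ t, 1 := Finset.sum_le_sum fun i _ => (totalDegree_X i).le
    _ = t.card := by simp
    _ = m := ht.2

lemma choose_pow_digit (p : ℕ) [hp : Fact p.Prime] (n i : ℕ) :
    Nat.choose n (p ^ i) ≡ n / p ^ i % p [MOD p] := by
  induction i generalizing n with
  | zero => simpa using (Nat.mod_modEq n p).symm
  | succ i ih =>
    have h1 : p ^ (i + 1) % p = 0 := by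
      rw [pow_succ]; exact Nat.mul_mod_left _ _
    have h2 : p ^ (i + 1) / p = p ^ i := by
      rw [pow_succ, Nat.mul_div_cancel _ hp.out.pos]
    calc Nat.choose n (p ^ (i + 1))
        ≡ Nat.choose (n % p) (p ^ (i+1) % p) * Nat.choose (n / p) (p ^ (i+1) / p) [MOD p] :=
          Choose.choose_modEq_choose_mod_mul_choose_div_nat
      _ = Nat.choose (n / p) (p ^ i) := by rw [h1, h2, Nat.choose_zero_right, one_mul]
      _ ≡ (n / p) / p ^ i % p [MOD p] := ih _
      _ = n / p ^ (i + 1) % p := by rw [Nat.div_div_eq_div_mul, ← pow_succ']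

lemma digits_zero_iff_dvd {p : ℕ} (hp : 1 < p) (a n : ℕ) :
    (∀ i < a, n / p ^ i % p = 0) ↔ p ^ a ∣ n := by
  induction a generalizing n with
  | zero => simp
  | succ a ih =>
    constructor
    · intro h
      have h0 : p ∣ n := by
        have := h 0 (Nat.succ_pos a)
        simpa [Nat.dvd_iff_mod_eq_zero] using this
      obtain ⟨m, rfl⟩ := h0
      rw [pow_succ']
      refine Nat.mul_dvd_mul_left p ((ih m).mp fun i hi => ?_)
      have := h (i + 1) (by omega)
      rwa [pow_succ', ← Nat.div_div_eq_div_mul, Nat.mul_div_cancel_left _ (by omega)] at this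
    · intro h i hi
      have hdvd : p ^ i ∣ n := dvd_trans (pow_dvd_pow p (by omega)) h
      rw [← Nat.dvd_iff_mod_eq_zero, Nat.dvd_div_iff_mul_dvd hdvd, ← pow_succ]
      exact dvd_trans (pow_dvd_pow p (by omega)) h

lemma prod_eq_one_iff' {F : Type*} [Field F] {a : ℕ} (f : ℕ → F)
    (hf : ∀ i, f i = 0 ∨ f i = 1) :
    ∏ i ∈ Finset.range a, f i = 1 ↔ ∀ i ∈ Finset.range a, f i = 1 := by
  constructor
  · intro h i hi
    rcases hf i with h0 | h1
    · rw [Finset.prod_eq_zero hi h0] at h; exact absurd h.symm one_ne_zero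
    · exact h1
  · exact Finset.prod_eq_one

lemma sum_pow_le_pow {p : ℕ} (hp : 2 ≤ p) (a : ℕ) :
    ∑ i ∈ Finset.range a, p ^ i ≤ p ^ a := by
  induction a with
  | zero => simp
  | succ a ih =>
    rw [Finset.sum_range_succ, pow_succ]
    nlinarith [pow_pos (by omega : 0 < p) a]

lemma zmod6_eq_zero_iff (z : ZMod 6) :
    z = 0 ↔ ZMod.castHom (by norm_num : (2:ℕ) ∣ 6) (ZMod 2) z = 0 ∧
      ZMod.castHom (by norm_num : (3:ℕ) ∣ 6) (ZMod 3) z = 0 := by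
  revert z; decide

lemma digit_dvd_iff (p : ℕ) [hp : Fact p.Prime] (n a : ℕ) :
    (∀ i < a, (p : ℕ) ∣ Nat.choose n (p ^ i)) ↔ p ^ a ∣ n := by
  rw [← digits_zero_iff_dvd hp.out.one_lt]
  refine forall₂_congr fun i _ => ?_
  have h := choose_pow_digit p n i
  have hlt : n / p ^ i % p < p := Nat.mod_lt _ hp.out.pos
  constructor
  · intro hd
    have h1 := h.symm.trans (Nat.modEq_zero_iff_dvd.mpr hd)
    rwa [Nat.ModEq, Nat.zero_mod, Nat.mod_eq_of_lt hlt] at h1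
  · intro hd
    exact Nat.modEq_zero_iff_dvd.mp (h.trans (by rw [hd]))

theorem low_degree_or_mod_six :
    ∃ c : ℕ, ∀ k : ℕ, ∃ g : MvPolynomial (Fin k) (ZMod 6),
      g.totalDegree ≤ c * (Nat.sqrt k + 1) ∧
      ∀ x : Fin k → ZMod 6, (∀ i, x i = 0 ∨ x i = 1) →
        (MvPolynomial.eval x g = 0 ↔ ∀ i, x i = 0) := by
  classical
  refine ⟨6, fun k => ?_⟩
  set s := Nat.sqrt k with hs
  set a := Nat.clog 2 (s + 1) with ha
  set b := Nat.clog 3 (s + 1) with hb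
  set P2 : MvPolynomial (Fin k) (ZMod 6) :=
    ∏ i ∈ Finset.range a, (1 - esymm (Fin k) (ZMod 6) (2 ^ i)) with hP2
  set P3 : MvPolynomial (Fin k) (ZMod 6) :=
    ∏ i ∈ Finset.range b, (1 - (esymm (Fin k) (ZMod 6) (3 ^ i)) ^ 2) with hP3
  refine ⟨C 3 * (1 - P2) + C 2 * (1 - P3), ?_, ?_⟩
  · -- degree bound
    have hs2 : 2 ^ a ≤ 2 * (s + 1) := by
      rcases Nat.lt_or_ge (s + 1) 2 with h1 | h1
      · have hs1 : s + 1 = 1 := by omega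
        rw [ha, hs1, Nat.clog_one_right]
        simp
      · have hpos : 0 < a := Nat.clog_pos one_lt_two (by omega)
        have hlt := Nat.pow_pred_clog_lt_self (one_lt_two) (show 1 < s + 1 by omega)
        calc 2 ^ a = 2 * 2 ^ (a - 1) := by rw [← pow_succ']; congr 1; omega
          _ ≤ 2 * (s + 1) := Nat.mul_le_mul_left 2 hlt.le
    have hs3 : 3 ^ b ≤ 3 * (s + 1) := by
      rcases Nat.lt_or_ge (s + 1) 2 with h1 | h1
      · have hs1 : s + 1 = 1 := by omega
        rw [hb, hs1, Nat.clog_one_right]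
        simp
      · have hpos : 0 < b := Nat.clog_pos (by norm_num) (by omega)
        have hlt := Nat.pow_pred_clog_lt_self (by norm_num : (1:ℕ) < 3) (show 1 < s + 1 by omega)
        calc 3 ^ b = 3 * 3 ^ (b - 1) := by rw [← pow_succ']; congr 1; omega
          _ ≤ 3 * (s + 1) := Nat.mul_le_mul_left 3 hlt.le
    have d2 : P2.totalDegree ≤ 2 ^ a := by
      rw [hP2]
      refine (totalDegree_finset_prod _ _).trans (le_trans ?_ (sum_pow_le_pow le_rfl a))
      refine Finset.sum_le_sum fun i _ => (totalDegree_sub _ _).trans ?_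
      simp only [totalDegree_one, Nat.max_le, Nat.zero_le, true_and]
      exact totalDegree_esymm_le' k (2 ^ i)
    have d3 : P3.totalDegree ≤ 2 * 3 ^ b := by
      rw [hP3]
      refine (totalDegree_finset_prod _ _).trans ?_
      calc ∑ i ∈ Finset.range b, (1 - (esymm (Fin k) (ZMod 6) (3 ^ i)) ^ 2).totalDegree
          ≤ ∑ i ∈ Finset.range b, 2 * 3 ^ i := by
            refine Finset.sum_le_sum fun i _ => (totalDegree_sub _ _).trans ?_
            simp only [totalDegree_one, Nat.max_le, Nat.zero_le, true_and]
            exact (totalDegree_pow _ _).trans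
              (Nat.mul_le_mul_left 2 (totalDegree_esymm_le' k (3 ^ i)))
        _ = 2 * ∑ i ∈ Finset.range b, 3 ^ i := by rw [Finset.mul_sum]
        _ ≤ 2 * 3 ^ b := Nat.mul_le_mul_left 2 (sum_pow_le_pow (by norm_num) b)
    calc (C 3 * (1 - P2) + C 2 * (1 - P3)).totalDegree
        ≤ max (C 3 * (1 - P2)).totalDegree (C 2 * (1 - P3)).totalDegree :=
          totalDegree_add _ _
      _ ≤ 6 * (s + 1) := by
          rw [Nat.max_le]
          constructor
          · refine (totalDegree_mul _ _).trans ?_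
            rw [totalDegree_C, zero_add]
            refine (totalDegree_sub _ _).trans ?_
            simp only [totalDegree_one, Nat.max_le, Nat.zero_le, true_and]
            omega
          · refine (totalDegree_mul _ _).trans ?_
            rw [totalDegree_C, zero_add]
            refine (totalDegree_sub _ _).trans ?_
            simp only [totalDegree_one, Nat.max_le, Nat.zero_le, true_and]
            omega
  · -- correctness
    intro x hx
    set n := (Finset.univ.filter fun i => x i = 1).card with hn
    have heval : MvPolynomial.eval x (C 3 * (1 - P2) + C 2 * (1 - P3)) =
        3 * (1 - ∏ i ∈ Finset.range a, (1 - (n.choose (2 ^ i) : ZMod 6))) +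
        2 * (1 - ∏ i ∈ Finset.range b, (1 - (n.choose (3 ^ i) : ZMod 6) ^ 2)) := by
      rw [hP2, hP3]
      simp [map_prod, eval_esymm_boolean x hx, ← hn]
    rw [heval, zmod6_eq_zero_iff]
    have c2 : (ZMod.castHom (by norm_num : (2:ℕ) ∣ 6) (ZMod 2))
        (3 * (1 - ∏ i ∈ Finset.range a, (1 - (n.choose (2 ^ i) : ZMod 6))) +
         2 * (1 - ∏ i ∈ Finset.range b, (1 - (n.choose (3 ^ i) : ZMod 6) ^ 2))) =
        1 - ∏ i ∈ Finset.range a, (1 - (n.choose (2 ^ i) : ZMod 2)) := by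
      simp only [map_add, map_mul, map_sub, map_one, map_prod, map_pow, map_natCast,
        map_ofNat]
      rw [show ((3:ZMod 2)) = 1 by decide, show ((2:ZMod 2)) = 0 by decide]
      ring
    have c3 : (ZMod.castHom (by norm_num : (3:ℕ) ∣ 6) (ZMod 3))
        (3 * (1 - ∏ i ∈ Finset.range a, (1 - (n.choose (2 ^ i) : ZMod 6))) +
         2 * (1 - ∏ i ∈ Finset.range b, (1 - (n.choose (3 ^ i) : ZMod 6) ^ 2))) =
        2 * (1 - ∏ i ∈ Finset.range b, (1 - (n.choose (3 ^ i) : ZMod 3) ^ 2)) := by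
      simp only [map_add, map_mul, map_sub, map_one, map_prod, map_pow, map_natCast,
        map_ofNat]
      rw [show ((3:ZMod 3)) = 0 by decide]
      ring
    rw [c2, c3]
    have h2iff : (1 - ∏ i ∈ Finset.range a, (1 - (n.choose (2 ^ i) : ZMod 2))) = 0 ↔
        2 ^ a ∣ n := by
      rw [sub_eq_zero, eq_comm,
        prod_eq_one_iff' _ (fun i => by
          rcases (by decide : ∀ z : ZMod 2, z = 0 ∨ z = 1) (1 - (n.choose (2 ^ i) : ZMod 2))
            with h | h
          · exact Or.inl h
          · exact Or.inr h)]
      rw [← digit_dvd_iff 2 n a]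
      refine forall_congr' fun i => ?_
      rw [Finset.mem_range]
      refine imp_congr_right fun _ => ?_
      rw [sub_eq_self, ZMod.natCast_eq_zero_iff]
    have h3iff : (2 * (1 - ∏ i ∈ Finset.range b, (1 - (n.choose (3 ^ i) : ZMod 3) ^ 2))) = 0 ↔
        3 ^ b ∣ n := by
      rw [mul_eq_zero]
      have h2ne : (2 : ZMod 3) ≠ 0 := by decide
      simp only [h2ne, false_or]
      rw [sub_eq_zero, eq_comm,
        prod_eq_one_iff' _ (fun i => by
          rcases (by decide : ∀ z : ZMod 3, 1 - z ^ 2 = 0 ∨ 1 - z ^ 2 = 1)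
            ((n.choose (3 ^ i) : ZMod 3)) with h | h
          · exact Or.inl h
          · exact Or.inr h)]
      rw [← digit_dvd_iff 3 n b]
      refine forall_congr' fun i => ?_
      rw [Finset.mem_range]
      refine imp_congr_right fun _ => ?_
      rw [sub_eq_self, pow_eq_zero_iff (two_ne_zero), ZMod.natCast_eq_zero_iff]
    rw [h2iff, h3iff]
    have hnzero : n = 0 ↔ ∀ i, x i = 0 := by
      rw [hn, Finset.card_eq_zero, Finset.filter_eq_empty_iff]
      constructor
      · intro h i
        rcases hx i with h0 | h1
        · exact h0
        · exact absurd h1 (h (Finset.mem_univ i))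
      · intro h i _
        rw [h i]
        decide
    constructor
    · rintro ⟨hd2, hd3⟩
      rw [← hnzero]
      by_contra hne
      have hdvd : 2 ^ a * 3 ^ b ∣ n :=
        (Nat.Coprime.pow _ _ (by norm_num : Nat.Coprime 2 3)).mul_dvd_of_dvd_of_dvd hd2 hd3
      have hle : 2 ^ a * 3 ^ b ≤ n := Nat.le_of_dvd (Nat.pos_of_ne_zero hne) hdvd
      have hub : n ≤ k := le_trans (Finset.card_filter_le _ _) (by simp)
      have hlt : k < (s + 1) * (s + 1) := by rw [hs]; exact Nat.lt_succ_sqrt k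
      have hge : (s + 1) * (s + 1) ≤ 2 ^ a * 3 ^ b :=
        Nat.mul_le_mul (Nat.le_pow_clog one_lt_two _) (Nat.le_pow_clog (by norm_num) _)
      omega
    · intro h
      have : n = 0 := hnzero.mpr h
      rw [this]
      exact ⟨dvd_zero _, dvd_zero _⟩
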